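/- arXiv:2004.12346 — 3 statements merged into one kernel-verified Lean document; each statement's English description precedes it below -/
import Mathlib

section
/- Suppose real numbers α'_{i} satisfy α'_i = α_i (1 - μM⁺_i - μM⁻_i) + α_{i+1} μ M⁺_i + α_{i-1} μ M⁻_i - f(α_i) s_i, where 0 ≤ M⁺_i, M⁻_i ≤ Lip(g)·U, μ·2·Lip(g)·U ≤ 1, f is Lipschitz with constant Lf and f(0) = f₀, and |s_i| ≤ S. Then sup_i |α'_i| ≤ sup_i |α_i| (1 + Lf · S) + |f₀| · S. -/
theorem convex_combination_sup_bound
    (α α' : ℤ → ℝ) (Mp Mm s : ℤ → ℝ) (f : ℝ → ℝ)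
    (μ L U S Lf f₀ A : ℝ)
    (hμ : 0 ≤ μ) (hL : 0 ≤ L) (hU : 0 ≤ U) (hS : 0 ≤ S)
    (hMp : ∀ i, 0 ≤ Mp i ∧ Mp i ≤ L * U)
    (hMm : ∀ i, 0 ≤ Mm i ∧ Mm i ≤ L * U)
    (hCFL : μ * 2 * L * U ≤ 1)
    (hf_lip : ∀ x y, |f x - f y| ≤ Lf * |x - y|)
    (hLf : 0 ≤ Lf)
    (hf0 : f 0 = f₀)
    (hs : ∀ i, |s i| ≤ S)
    (hscheme : ∀ i, α' i = α i * (1 - μ * Mp i - μ * Mm i)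
        + α (i + 1) * (μ * Mp i) + α (i - 1) * (μ * Mm i) - f (α i) * s i)
    (hA : ∀ i, |α i| ≤ A) :
    ∀ i, |α' i| ≤ A * (1 + Lf * S) + |f₀| * S := by
  intro i
  have hA0 : 0 ≤ A := le_trans (abs_nonneg (α 0)) (hA 0)
  obtain ⟨h1, h2⟩ := hMp i
  obtain ⟨h3, h4⟩ := hMm i
  have hc : 0 ≤ 1 - μ * Mp i - μ * Mm i := by nlinarith
  have hfb : |f (α i)| ≤ |f₀| + Lf * A := by
    have h := hf_lip (α i) 0
    rw [hf0, sub_zero] at h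
    have : |f (α i)| ≤ |f (α i) - f₀| + |f₀| := by
      calc |f (α i)| = |(f (α i) - f₀) + f₀| := by ring_nf
        _ ≤ |f (α i) - f₀| + |f₀| := abs_add_le _ _
    have hαA : Lf * |α i| ≤ Lf * A := by
      exact mul_le_mul_of_nonneg_left (hA i) hLf
    linarith
  have hfs : |f (α i) * s i| ≤ (|f₀| + Lf * A) * S := by
    rw [abs_mul]
    exact mul_le_mul hfb (hs i) (abs_nonneg _) (by positivity)
  have hμMp : 0 ≤ μ * Mp i := mul_nonneg hμ h1
  have hμMm : 0 ≤ μ * Mm i := mul_nonneg hμ h3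
  have hconv : |α i * (1 - μ * Mp i - μ * Mm i) + α (i + 1) * (μ * Mp i)
      + α (i - 1) * (μ * Mm i)| ≤ A := by
    calc |α i * (1 - μ * Mp i - μ * Mm i) + α (i + 1) * (μ * Mp i)
        + α (i - 1) * (μ * Mm i)|
        ≤ |α i * (1 - μ * Mp i - μ * Mm i)| + |α (i + 1) * (μ * Mp i)|
          + |α (i - 1) * (μ * Mm i)| := abs_add_three _ _ _
      _ = |α i| * (1 - μ * Mp i - μ * Mm i) + |α (i + 1)| * (μ * Mp i)
          + |α (i - 1)| * (μ * Mm i) := by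
            simp only [abs_mul, abs_of_nonneg hc, abs_of_nonneg hμ,
              abs_of_nonneg h1, abs_of_nonneg h3]
      _ ≤ A * (1 - μ * Mp i - μ * Mm i) + A * (μ * Mp i) + A * (μ * Mm i) := by
            gcongr <;> [exact hA i; exact hA (i+1); exact hA (i-1)]
      _ = A := by ring
  rw [hscheme i]
  calc |α i * (1 - μ * Mp i - μ * Mm i) + α (i + 1) * (μ * Mp i)
      + α (i - 1) * (μ * Mm i) - f (α i) * s i|
      ≤ |α i * (1 - μ * Mp i - μ * Mm i) + α (i + 1) * (μ * Mp i)
        + α (i - 1) * (μ * Mm i)| + |f (α i) * s i| := abs_sub _ _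
    _ ≤ A + (|f₀| + Lf * A) * S := add_le_add hconv hfs
    _ = A * (1 + Lf * S) + |f₀| * S := by ring
end

section
/- For a function β : (a,b) → ℝ of bounded variation and a partition a = x₀ < x₁ < … < x_{I+1} = b, the piecewise constant function Π⁰β defined on each interval (x_i, x_{i+1}) as the average of β over that interval has total variation at most the total variation of β, i.e. ∑_{i=1}^{I} |avg_{(x_i,x_{i+1})} β − avg_{(x_{i-1},x_i)} β| ≤ TV(β). -/
open MeasureTheory

private lemma chain_aux (f : ℝ → ℝ) (s : Set ℝ) (x : ℕ → ℝ) (hx : StrictMono x) (N : ℕ)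
    (c l h : ℕ → ℝ)
    (hl : ∀ n, n ≤ N → l n ∈ Set.Ioo (x n) (x (n + 1)))
    (hh : ∀ n, n ≤ N → h n ∈ Set.Ioo (x n) (x (n + 1)))
    (hls : ∀ n, n ≤ N → l n ∈ s) (hhs : ∀ n, n ≤ N → h n ∈ s)
    (hlf : ∀ n, n ≤ N → f (l n) ≤ c n) (hhf : ∀ n, n ≤ N → c n ≤ f (h n)) :
    ENNReal.ofReal (∑ i ∈ Finset.range N, |c (i + 1) - c i|) ≤ eVariationOn f s := by
  set D : ℕ → ℝ := fun n => ∑ i ∈ Finset.range n, |c (i + 1) - c i| with hD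
  set S : ℕ → (ℕ → ℝ) → ℝ :=
    fun m u => ∑ i ∈ Finset.range m, |f (u (i + 1)) - f (u i)| with hS
  have key : ∀ n, n ≤ N →
      (∃ m u, Monotone u ∧ (∀ i, u i ∈ s) ∧ u m ∈ Set.Ioo (x n) (x (n + 1)) ∧
        D n + (c n - f (u m)) ≤ S m u) ∧
      (∃ m u, Monotone u ∧ (∀ i, u i ∈ s) ∧ u m ∈ Set.Ioo (x n) (x (n + 1)) ∧
        D n + (f (u m) - c n) ≤ S m u) ∧
      (∃ m u, Monotone u ∧ (∀ i, u i ∈ s) ∧ D n ≤ S m u) := by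
    intro n
    induction n with
    | zero =>
      intro hn
      have hD0 : D 0 = 0 := by simp [hD]
      refine ⟨⟨0, fun _ => h 0, monotone_const, fun _ => hhs 0 hn, hh 0 hn, ?_⟩,
        ⟨0, fun _ => l 0, monotone_const, fun _ => hls 0 hn, hl 0 hn, ?_⟩,
        ⟨0, fun _ => l 0, monotone_const, fun _ => hls 0 hn, ?_⟩⟩
      · have := hhf 0 hn
        simp only [hS, Finset.range_zero, Finset.sum_empty, hD0]
        linarith
      · have := hlf 0 hn
        simp only [hS, Finset.range_zero, Finset.sum_empty, hD0]
        linarith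
      · simp [hS, hD0]
    | succ n ih =>
      intro hn
      have hn' : n ≤ N := Nat.le_of_succ_le hn
      obtain ⟨hL, hH, -⟩ := ih hn'
      have hDsucc : D (n + 1) = D n + |c (n + 1) - c n| := Finset.sum_range_succ _ n
      rcases le_total (c n) (c (n + 1)) with hd | hd
      · -- going up : use the H chain, append the high point of interval n+1
        obtain ⟨m, u, hum, hus, hmem, hsum⟩ := hH
        set y := h (n + 1) with hy
        have hyI := hh (n + 1) hn
        have hys := hhs (n + 1) hn
        have hyf := hhf (n + 1) hn
        have humy : u m ≤ y := le_of_lt (lt_trans hmem.2 hyI.1)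
        set u' : ℕ → ℝ := fun i => if i ≤ m then u i else y with hu'
        have hu'eq : ∀ i, i ≤ m → u' i = u i := fun i hi => if_pos hi
        have hu'last : u' (m + 1) = y := if_neg (by omega)
        have hmono' : Monotone u' := by
          intro i j hij
          by_cases hi : i ≤ m <;> by_cases hj : j ≤ m
          · simpa [hu', hi, hj] using hum hij
          · simpa [hu', hi, hj] using le_trans (hum hi) humy
          · omega
          · simp [hu', hi, hj]
        have hus' : ∀ i, u' i ∈ s := by
          intro i
          by_cases hi : i ≤ m
          · rw [hu'eq i hi]; exact hus i
          · simp only [hu', if_neg hi]; exact hys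
        have hSsucc : S (m + 1) u' = S m u + |f y - f (u m)| := by
          simp only [hS]
          rw [Finset.sum_range_succ]
          congr 1
          · apply Finset.sum_congr rfl
            intro i hi
            have hi' : i < m := Finset.mem_range.1 hi
            rw [hu'eq i (le_of_lt hi'), hu'eq (i + 1) hi']
          · rw [hu'last, hu'eq m le_rfl]
        have habs : |c (n + 1) - c n| = c (n + 1) - c n := abs_of_nonneg (by linarith)
        have hkey : D (n + 1) + (f y - c (n + 1)) ≤ S (m + 1) u' := by
          have h1 : f y - f (u m) ≤ |f y - f (u m)| := le_abs_self _
          rw [hSsucc, hDsucc, habs]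
          linarith
        have hmem' : u' (m + 1) ∈ Set.Ioo (x (n + 1)) (x (n + 1 + 1)) := by
          rw [hu'last]; exact hyI
        have hfy : f (u' (m + 1)) = f y := by rw [hu'last]
        refine ⟨⟨m + 1, u', hmono', hus', hmem', ?_⟩,
          ⟨m + 1, u', hmono', hus', hmem', ?_⟩,
          ⟨m + 1, u', hmono', hus', ?_⟩⟩
        · rw [hfy]; linarith
        · rw [hfy]; exact hkey
        · linarith
      · -- going down : use the L chain, append the low point of interval n+1
        obtain ⟨m, u, hum, hus, hmem, hsum⟩ := hL
        set y := l (n + 1) with hy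
        have hyI := hl (n + 1) hn
        have hys := hls (n + 1) hn
        have hyf := hlf (n + 1) hn
        have humy : u m ≤ y := le_of_lt (lt_trans hmem.2 hyI.1)
        set u' : ℕ → ℝ := fun i => if i ≤ m then u i else y with hu'
        have hu'eq : ∀ i, i ≤ m → u' i = u i := fun i hi => if_pos hi
        have hu'last : u' (m + 1) = y := if_neg (by omega)
        have hmono' : Monotone u' := by
          intro i j hij
          by_cases hi : i ≤ m <;> by_cases hj : j ≤ m
          · simpa [hu', hi, hj] using hum hij
          · simpa [hu', hi, hj] using le_trans (hum hi) humy
          · omega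
          · simp [hu', hi, hj]
        have hus' : ∀ i, u' i ∈ s := by
          intro i
          by_cases hi : i ≤ m
          · rw [hu'eq i hi]; exact hus i
          · simp only [hu', if_neg hi]; exact hys
        have hSsucc : S (m + 1) u' = S m u + |f y - f (u m)| := by
          simp only [hS]
          rw [Finset.sum_range_succ]
          congr 1
          · apply Finset.sum_congr rfl
            intro i hi
            have hi' : i < m := Finset.mem_range.1 hi
            rw [hu'eq i (le_of_lt hi'), hu'eq (i + 1) hi']
          · rw [hu'last, hu'eq m le_rfl]
        have habs : |c (n + 1) - c n| = c n - c (n + 1) := by rw [abs_of_nonpos (by linarith : c (n + 1) - c n ≤ 0)]; ring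
        have hkey : D (n + 1) + (c (n + 1) - f y) ≤ S (m + 1) u' := by
          have h1 : f (u m) - f y ≤ |f y - f (u m)| := by
            rw [abs_sub_comm]; exact le_abs_self _
          rw [hSsucc, hDsucc, habs]
          linarith
        have hmem' : u' (m + 1) ∈ Set.Ioo (x (n + 1)) (x (n + 1 + 1)) := by
          rw [hu'last]; exact hyI
        have hfy : f (u' (m + 1)) = f y := by rw [hu'last]
        refine ⟨⟨m + 1, u', hmono', hus', hmem', ?_⟩,
          ⟨m + 1, u', hmono', hus', hmem', ?_⟩,
          ⟨m + 1, u', hmono', hus', ?_⟩⟩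
        · rw [hfy]; exact hkey
        · rw [hfy]; linarith
        · linarith
  obtain ⟨-, -, m, u, hum, hus, hsum⟩ := key N le_rfl
  calc ENNReal.ofReal (D N) ≤ ENNReal.ofReal (S m u) := ENNReal.ofReal_le_ofReal hsum
    _ = ∑ i ∈ Finset.range m, edist (f (u (i + 1))) (f (u i)) := by
        rw [hS, ENNReal.ofReal_sum_of_nonneg (fun i _ => abs_nonneg _)]
        apply Finset.sum_congr rfl
        intro i _
        rw [edist_dist, Real.dist_eq]
    _ ≤ eVariationOn f s := eVariationOn.sum_le (f := f) (n := m) hum hus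

theorem projection_total_variation_bound (a b : ℝ) (β : ℝ → ℝ) (I : ℕ) (x : ℕ → ℝ)
    (hx : StrictMono x) (hx0 : x 0 = a) (hxI : x (I + 1) = b)
    (hBV : BoundedVariationOn β (Set.Ioo a b)) :
    ∑ i ∈ Finset.range I,
        |(⨍ t in Set.Ioo (x (i + 1)) (x (i + 2)), β t) -
          ⨍ t in Set.Ioo (x i) (x (i + 1)), β t| ≤
      (eVariationOn β (Set.Ioo a b)).toReal := by
  set s := Set.Ioo a b with hs
  have hab : a < b := by
    rw [← hx0, ← hxI]; exact hx (Nat.succ_pos I)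
  have hsub : ∀ n, n ≤ I → Set.Ioo (x n) (x (n + 1)) ⊆ s := by
    intro n hn t ht
    constructor
    · have : a ≤ x n := by rw [← hx0]; exact hx.monotone (Nat.zero_le n)
      exact lt_of_le_of_lt this ht.1
    · have : x (n + 1) ≤ b := by rw [← hxI]; exact hx.monotone (by omega)
      exact lt_of_lt_of_le ht.2 this
  obtain ⟨p, q, hp, hq, hpq⟩ := hBV.locallyBoundedVariationOn.exists_monotoneOn_sub_monotoneOn
  have ht₀ : (a + b) / 2 ∈ s := ⟨by linarith, by linarith⟩
  have hInt : ∀ n, n ≤ I → IntegrableOn β (Set.Ioo (x n) (x (n + 1))) volume := by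
    intro n hn
    have hsub' := hsub n hn
    have hmeas : AEMeasurable β (volume.restrict (Set.Ioo (x n) (x (n + 1)))) := by
      rw [hpq]
      exact (aemeasurable_restrict_of_monotoneOn measurableSet_Ioo (hp.mono hsub')).sub
        (aemeasurable_restrict_of_monotoneOn measurableSet_Ioo (hq.mono hsub'))
    refine Integrable.mono'
      (g := fun _ => |β ((a + b) / 2)| + (eVariationOn β s).toReal)
      (integrableOn_const measure_Ioo_lt_top.ne)
      hmeas.aestronglyMeasurable ?_
    rw [ae_restrict_iff' measurableSet_Ioo]
    refine ae_of_all _ fun y hy => ?_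
    have h1 := hBV.sub_le (hsub' hy) ht₀
    have h2 := hBV.sub_le ht₀ (hsub' hy)
    have h3 : β ((a + b) / 2) ≤ |β ((a + b) / 2)| := le_abs_self _
    have h4 : -|β ((a + b) / 2)| ≤ β ((a + b) / 2) := neg_abs_le _
    rw [Real.norm_eq_abs, abs_le]
    constructor <;> linarith
  set c : ℕ → ℝ := fun n => ⨍ t in Set.Ioo (x n) (x (n + 1)), β t with hc
  have hμ0 : ∀ n : ℕ, volume (Set.Ioo (x n) (x (n + 1))) ≠ 0 := by
    intro n
    rw [Real.volume_Ioo]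
    exact ne_of_gt (ENNReal.ofReal_pos.2 (sub_pos.2 (hx (Nat.lt_succ_self n))))
  have hμtop : ∀ n : ℕ, volume (Set.Ioo (x n) (x (n + 1))) ≠ ⊤ :=
    fun n => measure_Ioo_lt_top.ne
  have lows : ∀ n, ∃ t, n ≤ I → t ∈ Set.Ioo (x n) (x (n + 1)) ∧ β t ≤ c n := by
    intro n
    by_cases hn : n ≤ I
    · obtain ⟨t, ht, htle⟩ := exists_le_setAverage (hμ0 n) (hμtop n) (hInt n hn)
      exact ⟨t, fun _ => ⟨ht, htle⟩⟩
    · exact ⟨0, fun h => absurd h hn⟩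
  have highs : ∀ n, ∃ t, n ≤ I → t ∈ Set.Ioo (x n) (x (n + 1)) ∧ c n ≤ β t := by
    intro n
    by_cases hn : n ≤ I
    · obtain ⟨t, ht, htle⟩ := exists_setAverage_le (hμ0 n) (hμtop n) (hInt n hn)
      exact ⟨t, fun _ => ⟨ht, htle⟩⟩
    · exact ⟨0, fun h => absurd h hn⟩
  choose l hl using lows
  choose h hh using highs
  have hkey := chain_aux β s x hx I c l h
    (fun n hn => (hl n hn).1) (fun n hn => (hh n hn).1)
    (fun n hn => hsub n hn (hl n hn).1) (fun n hn => hsub n hn (hh n hn).1)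
    (fun n hn => (hl n hn).2) (fun n hn => (hh n hn).2)
  have hsum_eq : ∑ i ∈ Finset.range I,
      |(⨍ t in Set.Ioo (x (i + 1)) (x (i + 2)), β t) -
        ⨍ t in Set.Ioo (x i) (x (i + 1)), β t| =
      ∑ i ∈ Finset.range I, |c (i + 1) - c i| := rfl
  rw [hsum_eq]
  have hnonneg : (0 : ℝ) ≤ ∑ i ∈ Finset.range I, |c (i + 1) - c i| :=
    Finset.sum_nonneg fun i _ => abs_nonneg _
  calc ∑ i ∈ Finset.range I, |c (i + 1) - c i|
      = (ENNReal.ofReal (∑ i ∈ Finset.range I, |c (i + 1) - c i|)).toReal :=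
        (ENNReal.toReal_ofReal hnonneg).symm
    _ ≤ (eVariationOn β s).toReal := ENNReal.toReal_mono hBV hkey
end

section
/- Consider an explicit 1D three-point scheme α^{n+1}_i = α^n_i(1 − c_i) + a_i α^n_{i+1} + b_i α^n_{i-1} with a_i, b_i ≥ 0 and c_i = a_i + b_i ≤ 1 for all i, on a bi-infinite (or periodic) index set. Then ∑_i |α^{n+1}_{i+1} − α^{n+1}_i| ≤ ∑_i |α^n_{i+1} − α^n_i|, i.e. the discrete total variation is nonincreasing. -/
theorem harten_tvd (α α' : ℤ → ℝ) (C D : ℤ → ℝ)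
    (hC : ∀ i, 0 ≤ C i) (hD : ∀ i, 0 ≤ D i)
    (hCD : ∀ i, C i + D i ≤ 1)
    (hscheme : ∀ i, α' i = α i + C i * (α (i + 1) - α i) - D (i - 1) * (α i - α (i - 1)))
    (hsum : Summable fun i => |α (i + 1) - α i|) :
    ∑' i : ℤ, |α' (i + 1) - α' i| ≤ ∑' i : ℤ, |α (i + 1) - α i| := by
  set Δ : ℤ → ℝ := fun i => α (i + 1) - α i with hΔ
  have key : ∀ i : ℤ, α' (i + 1) - α' i =
      (1 - C i - D i) * Δ i + C (i + 1) * Δ (i + 1) + D (i - 1) * Δ (i - 1) := by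
    intro i
    have h1 := hscheme (i + 1)
    have h2 := hscheme i
    have e1 : i + 1 - 1 = i := by ring
    have e2 : i - 1 + 1 = i := by ring
    simp only [hΔ, e1, e2] at *
    rw [h1, h2]; ring
  have hCle : ∀ i, C i ≤ 1 := fun i => le_trans (le_add_of_nonneg_right (hD i)) (hCD i)
  have hDle : ∀ i, D i ≤ 1 := fun i => le_trans (le_add_of_nonneg_left (hC i)) (hCD i)
  have hbd : ∀ i : ℤ, |α' (i + 1) - α' i| ≤
      (1 - C i - D i) * |Δ i| + C (i + 1) * |Δ (i + 1)| + D (i - 1) * |Δ (i - 1)| := by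
    intro i
    rw [key i]
    calc |(1 - C i - D i) * Δ i + C (i + 1) * Δ (i + 1) + D (i - 1) * Δ (i - 1)|
        ≤ |(1 - C i - D i) * Δ i + C (i + 1) * Δ (i + 1)| + |D (i - 1) * Δ (i - 1)| :=
          abs_add_le _ _
      _ ≤ |(1 - C i - D i) * Δ i| + |C (i + 1) * Δ (i + 1)| + |D (i - 1) * Δ (i - 1)| := by
          gcongr; exact abs_add_le _ _
      _ = (1 - C i - D i) * |Δ i| + C (i + 1) * |Δ (i + 1)| + D (i - 1) * |Δ (i - 1)| := by
          rw [abs_mul, abs_mul, abs_mul, abs_of_nonneg (by linarith [hCD i]),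
            abs_of_nonneg (hC _), abs_of_nonneg (hD _)]
  -- summability of each piece
  have hs1 : Summable fun i : ℤ => (1 - C i - D i) * |Δ i| := by
    apply Summable.of_nonneg_of_le (fun i => mul_nonneg (by linarith [hCD i]) (abs_nonneg _))
      (fun i => ?_) hsum
    calc (1 - C i - D i) * |Δ i| ≤ 1 * |Δ i| := by
          apply mul_le_mul_of_nonneg_right _ (abs_nonneg _); linarith [hC i, hD i]
      _ = |Δ i| := one_mul _
  have hsC : Summable fun i : ℤ => C i * |Δ i| := by
    apply Summable.of_nonneg_of_le (fun i => mul_nonneg (hC i) (abs_nonneg _))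
      (fun i => ?_) hsum
    calc C i * |Δ i| ≤ 1 * |Δ i| := mul_le_mul_of_nonneg_right (hCle i) (abs_nonneg _)
      _ = |Δ i| := one_mul _
  have hsD : Summable fun i : ℤ => D i * |Δ i| := by
    apply Summable.of_nonneg_of_le (fun i => mul_nonneg (hD i) (abs_nonneg _))
      (fun i => ?_) hsum
    calc D i * |Δ i| ≤ 1 * |Δ i| := mul_le_mul_of_nonneg_right (hDle i) (abs_nonneg _)
      _ = |Δ i| := one_mul _
  have hs2 : Summable fun i : ℤ => C (i + 1) * |Δ (i + 1)| :=
    ((Equiv.addRight (1 : ℤ)).summable_iff (f := fun i => C i * |Δ i|)).mpr hsC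
  have hs3 : Summable fun i : ℤ => D (i - 1) * |Δ (i - 1)| :=
    ((Equiv.subRight (1 : ℤ)).summable_iff (f := fun i => D i * |Δ i|)).mpr hsD
  have hsg : Summable fun i : ℤ =>
      (1 - C i - D i) * |Δ i| + C (i + 1) * |Δ (i + 1)| + D (i - 1) * |Δ (i - 1)| :=
    (hs1.add hs2).add hs3
  have hs' : Summable fun i : ℤ => |α' (i + 1) - α' i| :=
    Summable.of_nonneg_of_le (fun i => abs_nonneg _) hbd hsg
  calc ∑' i : ℤ, |α' (i + 1) - α' i|
      ≤ ∑' i : ℤ, ((1 - C i - D i) * |Δ i| + C (i + 1) * |Δ (i + 1)| + D (i - 1) * |Δ (i - 1)|) :=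
        Summable.tsum_le_tsum hbd hs' hsg
    _ = (∑' i : ℤ, (1 - C i - D i) * |Δ i|) + (∑' i : ℤ, C (i + 1) * |Δ (i + 1)|)
        + ∑' i : ℤ, D (i - 1) * |Δ (i - 1)| := by
        rw [Summable.tsum_add (hs1.add hs2) hs3, Summable.tsum_add hs1 hs2]
    _ = (∑' i : ℤ, (1 - C i - D i) * |Δ i|) + (∑' i : ℤ, C i * |Δ i|)
        + ∑' i : ℤ, D i * |Δ i| := by
        have e1 : ∑' i : ℤ, C (i + 1) * |Δ (i + 1)| = ∑' i : ℤ, C i * |Δ i| := by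
          simpa using (Equiv.addRight (1 : ℤ)).tsum_eq (fun i => C i * |Δ i|)
        have e2 : ∑' i : ℤ, D (i - 1) * |Δ (i - 1)| = ∑' i : ℤ, D i * |Δ i| := by
          simpa using (Equiv.subRight (1 : ℤ)).tsum_eq (fun i => D i * |Δ i|)
        rw [e1, e2]
    _ = ∑' i : ℤ, ((1 - C i - D i) * |Δ i| + C i * |Δ i| + D i * |Δ i|) := by
        rw [Summable.tsum_add (hs1.add hsC) hsD, Summable.tsum_add hs1 hsC]
    _ = ∑' i : ℤ, |Δ i| := by
        apply tsum_congr; intro i; ring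
end
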